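/- Let p ≥ 1 be an integer and let G be a finite rooted forest with n ≥ 1 vertices. Then |leaves(G)| + |longpaths(G, p)| ≥ n/(6p). -/

import Mathlib

open Function

/-- A finite rooted forest: for every vertex, iterating the parent function
eventually stabilizes (reaches a root, i.e. a fixed point of `par`). -/
def IsForest {V : Type*} (par : V → V) : Prop :=
  ∀ v : V, ∃ m : ℕ, par^[m + 1] v = par^[m] v

/-- The leaves: vertices with no children. -/
def leaves {V : Type*} (par : V → V) : Set V :=
  {v | ∀ u, par u = v → u = v}

/-- A vertex has exactly one child. -/
def hasOneChild {V : Type*} (par : V → V) (v : V) : Prop :=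
  ∃! u, u ≠ v ∧ par u = v

/-- Adjacency (parent/child relation) restricted to the subset `S`. -/
def adjOn {V : Type*} (par : V → V) (S : Set V) (u v : V) : Prop :=
  u ∈ S ∧ v ∈ S ∧ u ≠ v ∧ (par u = v ∨ par v = u)

/-- `longpaths par p`: vertices having exactly one child that lie in a connected
component of size at least `p` of the graph induced on the vertices having
exactly one child. -/
def longpaths {V : Type*} (par : V → V) (p : ℕ) : Set V :=
  {v | hasOneChild par v ∧
    p ≤ {u | Relation.ReflTransGen (adjOn par {w | hasOneChild par w}) v u}.ncard}

section Aux

variable {V : Type*} (par : V → V)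

open Classical in
/-- A choice of child of `v` (junk value `v` if no child exists). -/
noncomputable def chld (v : V) : V :=
  if h : ∃ u, u ≠ v ∧ par u = v then h.choose else v

lemma chld_spec {v : V} (h : hasOneChild par v) :
    chld par v ≠ v ∧ par (chld par v) = v := by
  obtain ⟨u, hu, -⟩ := h
  have he : ∃ u, u ≠ v ∧ par u = v := ⟨u, hu⟩
  rw [chld]
  rw [dif_pos he]
  exact he.choose_spec

lemma iter_par (v : V) (k : ℕ) :
    ∀ l : ℕ, (∀ j, j < k + l → hasOneChild par ((chld par)^[j] v)) →
      par^[l] ((chld par)^[k + l] v) = (chld par)^[k] v := by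
  intro l
  induction l with
  | zero => intro _; simp
  | succ l ih =>
    intro h
    have h1 : hasOneChild par ((chld par)^[k + l] v) := h _ (by omega)
    have e2 : par ((chld par)^[k + (l + 1)] v) = (chld par)^[k + l] v := by
      have e : k + (l + 1) = (k + l) + 1 := by omega
      rw [e, Function.iterate_succ_apply']
      exact (chld_spec par h1).2
    rw [Function.iterate_succ_apply, e2]
    exact ih (fun j hj => h j (by omega))

lemma stop_aux (hforest : IsForest par) (v : V)
    (hall : ∀ k, hasOneChild par ((chld par)^[k] v))
    {i j : ℕ} (hlt : i < j) (he : (chld par)^[i] v = (chld par)^[j] v) : False := by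
  set c := j - i with hcdef
  have hc1 : 1 ≤ c := by omega
  have key : ∀ t l : ℕ, par^[l] ((chld par)^[t + l] v) = (chld par)^[t] v :=
    fun t l => iter_par par v t l (fun j _ => hall j)
  have hcyc : (chld par)^[c] v = v := by
    have e1 : par^[i] ((chld par)^[0 + i] v) = (chld par)^[0] v := key 0 i
    have e2 : par^[i] ((chld par)^[c + i] v) = (chld par)^[c] v := key c i
    have hci : c + i = j := by omega
    rw [hci, ← he] at e2
    simp only [Nat.zero_add, Function.iterate_zero_apply] at e1
    rw [e1] at e2
    exact e2.symm
  have hfix : ∀ q : ℕ, (chld par)^[c * q] v = v := by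
    intro q
    rw [Function.iterate_mul]
    exact Function.iterate_fixed hcyc q
  obtain ⟨m, hm⟩ := hforest v
  have hqc : m + 1 ≤ c * (m + 1) := by nlinarith
  set s := c * (m + 1) - (m + 1) with hsdef
  have key2 : ∀ t l : ℕ, t + l = c * (m + 1) → par^[l] v = (chld par)^[t] v := by
    intro t l htl
    have := key t l
    rw [htl, hfix (m + 1)] at this
    exact this
  have e3 : par^[m] v = (chld par)^[s + 1] v := key2 (s + 1) m (by omega)
  have e4 : par^[m + 1] v = (chld par)^[s] v := key2 s (m + 1) (by omega)
  have e5 : (chld par)^[s] v = (chld par)^[s + 1] v := by rw [← e4, hm, e3]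
  have e6 : par^[s] ((chld par)^[0 + s] v) = (chld par)^[0] v := key 0 s
  have e7 : par^[s] ((chld par)^[1 + s] v) = (chld par)^[1] v := key 1 s
  have h0 : (0 : ℕ) + s = s := by omega
  have h1 : (1 : ℕ) + s = s + 1 := by omega
  rw [h0] at e6
  rw [h1, ← e5] at e7
  rw [e6] at e7
  simp only [Function.iterate_zero_apply, Function.iterate_one] at e7
  have hne : chld par v ≠ v := (chld_spec par (by simpa using hall 0)).1
  exact hne e7.symm

lemma exists_stop [Finite V] (hforest : IsForest par) (v : V) :
    ∃ k, ¬ hasOneChild par ((chld par)^[k] v) := by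
  by_contra hc
  push_neg at hc
  obtain ⟨i, j, hij, he⟩ := Finite.exists_ne_map_eq_of_infinite
    (fun k => (chld par)^[k] v)
  rcases lt_trichotomy i j with h | h | h
  · exact stop_aux par hforest v hc h he
  · exact hij h
  · exact stop_aux par hforest v hc h he.symm

lemma chain_rtg (v : V) :
    ∀ j : ℕ, (∀ l, l ≤ j → hasOneChild par ((chld par)^[l] v)) →
      Relation.ReflTransGen (adjOn par {w | hasOneChild par w}) v ((chld par)^[j] v) := by
  intro j
  induction j with
  | zero => intro _; simp only [Function.iterate_zero_apply]; exact Relation.ReflTransGen.refl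
  | succ j ih =>
    intro h
    have hj : hasOneChild par ((chld par)^[j] v) := h j (by omega)
    have hj1 : hasOneChild par ((chld par)^[j + 1] v) := h (j + 1) le_rfl
    have e : (chld par)^[j + 1] v = chld par ((chld par)^[j] v) :=
      Function.iterate_succ_apply' _ _ _
    refine (ih (fun l hl => h l (by omega))).tail ?_
    refine ⟨hj, hj1, ?_, Or.inr ?_⟩
    · rw [e]; exact ((chld_spec par hj).1).symm
    · rw [e]; exact (chld_spec par hj).2

end Aux

theorem stmt1 {V : Type*} [Fintype V] (p : ℕ) (hp : 1 ≤ p)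
    (par : V → V) (hforest : IsForest par)
    (n : ℕ) (hn : n = Fintype.card V) (hn1 : 1 ≤ n) :
    (n : ℝ) / (6 * p) ≤ ((leaves par).ncard : ℝ) + ((longpaths par p).ncard : ℝ) := by
  classical
  subst hn
  set comp : V → Set V :=
    fun v => {u | Relation.ReflTransGen (adjOn par {w | hasOneChild par w}) v u} with hcompdef
  set L : Finset V := Finset.univ.filter (fun v => v ∈ leaves par) with hLdef
  set O : Finset V := Finset.univ.filter (fun v => hasOneChild par v) with hOdef
  set B : Finset V := Finset.univ.filter
    (fun v => v ∉ leaves par ∧ ¬ hasOneChild par v) with hBdef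
  set LG : Finset V := Finset.univ.filter (fun v => v ∈ longpaths par p) with hLGdef
  set SH : Finset V := O.filter (fun v => ¬ p ≤ (comp v).ncard) with hSHdef
  have hdisj : ∀ v, hasOneChild par v → v ∉ leaves par := by
    intro v hv hl
    obtain ⟨u, ⟨hu1, hu2⟩, -⟩ := hv
    exact hu1 (hl u hu2)
  -- Partition of all vertices
  have hpart : Fintype.card V = L.card + O.card + B.card := by
    have e1 := Finset.card_filter_add_card_filter_not
      (s := (Finset.univ : Finset V)) (p := fun v => v ∈ leaves par)
    have e2 := Finset.card_filter_add_card_filter_not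
      (s := Finset.univ.filter (fun v : V => ¬ v ∈ leaves par))
      (p := fun v => hasOneChild par v)
    have e3 : (Finset.univ.filter (fun v : V => ¬ v ∈ leaves par)).filter
        (fun v => hasOneChild par v) = O := by
      rw [Finset.filter_filter, hOdef]
      ext v
      simp only [Finset.mem_filter, Finset.mem_univ, true_and]
      exact ⟨fun h => h.2, fun h => ⟨hdisj v h, h⟩⟩
    have e4 : (Finset.univ.filter (fun v : V => ¬ v ∈ leaves par)).filter
        (fun v => ¬ hasOneChild par v) = B := by
      rw [Finset.filter_filter, hBdef]
    rw [e3, e4] at e2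
    rw [Finset.card_univ, ← hLdef] at e1
    omega
  -- Counting children: O + 2B ≤ n
  have hcount : O.card + 2 * B.card ≤ Fintype.card V := by
    set NR : Finset V := Finset.univ.filter (fun u => par u ≠ u) with hNRdef
    have hfib : NR.card = ∑ v ∈ Finset.univ, (NR.filter (fun u => par u = v)).card :=
      Finset.card_eq_sum_card_fiberwise (fun a _ => Finset.mem_univ (par a))
    have hmemNR : ∀ u v : V, u ≠ v → par u = v → u ∈ NR.filter (fun u => par u = v) := by
      intro u v h1 h2
      rw [hNRdef]
      simp only [Finset.mem_filter, Finset.mem_univ, true_and]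
      exact ⟨by rw [h2]; exact fun e => h1 e.symm, h2⟩
    have h1 : ∀ v ∈ O, 1 ≤ (NR.filter (fun u => par u = v)).card := by
      intro v hv
      rw [hOdef, Finset.mem_filter] at hv
      obtain ⟨u, ⟨hu1, hu2⟩, -⟩ := hv.2
      exact Finset.card_pos.mpr ⟨u, hmemNR u v hu1 hu2⟩
    have h2 : ∀ v ∈ B, 2 ≤ (NR.filter (fun u => par u = v)).card := by
      intro v hv
      rw [hBdef, Finset.mem_filter] at hv
      obtain ⟨-, hnl, hno⟩ := hv
      rw [leaves, Set.mem_setOf_eq] at hnl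
      push_neg at hnl
      obtain ⟨u, hu2, hu1⟩ := hnl
      have hex : ∃ u', (u' ≠ v ∧ par u' = v) ∧ u' ≠ u := by
        by_contra hx
        push_neg at hx
        exact hno ⟨u, ⟨hu1, hu2⟩, hx⟩
      obtain ⟨u', ⟨hu1', hu2'⟩, hne⟩ := hex
      exact Finset.one_lt_card.mpr
        ⟨u, hmemNR u v hu1 hu2, u', hmemNR u' v hu1' hu2', hne.symm⟩
    have hdOB : Disjoint O B := by
      rw [Finset.disjoint_left]
      intro v hv hv'
      rw [hOdef, Finset.mem_filter] at hv
      rw [hBdef, Finset.mem_filter] at hv'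
      exact hv'.2.2 hv.2
    calc O.card + 2 * B.card
        = ∑ _v ∈ O, 1 + ∑ _v ∈ B, 2 := by
          simp [Finset.sum_const, mul_comm]
      _ ≤ ∑ v ∈ O, (NR.filter (fun u => par u = v)).card
          + ∑ v ∈ B, (NR.filter (fun u => par u = v)).card :=
          add_le_add (Finset.sum_le_sum h1) (Finset.sum_le_sum h2)
      _ = ∑ v ∈ O ∪ B, (NR.filter (fun u => par u = v)).card :=
          (Finset.sum_union hdOB).symm
      _ ≤ ∑ v ∈ Finset.univ, (NR.filter (fun u => par u = v)).card :=
          Finset.sum_le_sum_of_subset (Finset.subset_univ _)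
      _ = NR.card := hfib.symm
      _ ≤ Fintype.card V := by
          rw [← Finset.card_univ]; exact Finset.card_filter_le _ _
  -- Splitting one-child vertices into long and short
  have hsplit : O.card = LG.card + SH.card := by
    have e := Finset.card_filter_add_card_filter_not
      (s := O) (p := fun v => p ≤ (comp v).ncard)
    have eLG : O.filter (fun v => p ≤ (comp v).ncard) = LG := by
      rw [hOdef, hLGdef, Finset.filter_filter]
      ext v
      simp only [Finset.mem_filter, Finset.mem_univ, true_and]
      rw [longpaths, Set.mem_setOf_eq, hcompdef]
    rw [eLG, ← hSHdef] at e
    omega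
  -- The map to the end of the descending chain
  set K : V → ℕ := fun v => Nat.find (exists_stop par hforest v) with hKdef
  set φ : V → V := fun v => (chld par)^[K v] v with hphidef
  have hφ_not : ∀ v, ¬ hasOneChild par (φ v) :=
    fun v => Nat.find_spec (exists_stop par hforest v)
  have hφ_lt : ∀ v l, l < K v → hasOneChild par ((chld par)^[l] v) := by
    intro v l hl
    have := Nat.find_min (exists_stop par hforest v) hl
    exact not_not.mp this
  have hK_pos : ∀ v, hasOneChild par v → 1 ≤ K v := by
    intro v hv
    by_contra h
    have h0 : K v = 0 := by omega
    apply hφ_not v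
    rw [hphidef]
    simp only [h0, Function.iterate_zero_apply]
    exact hv
  have hpar_φ : ∀ v, hasOneChild par v →
      par (φ v) = (chld par)^[K v - 1] v ∧
      Relation.ReflTransGen (adjOn par {w | hasOneChild par w}) v
        ((chld par)^[K v - 1] v) := by
    intro v hv
    have h1 : 1 ≤ K v := hK_pos v hv
    have hone : hasOneChild par ((chld par)^[K v - 1] v) := hφ_lt v _ (by omega)
    have e : φ v = chld par ((chld par)^[K v - 1] v) := by
      have h2 : K v = (K v - 1) + 1 := by omega
      show (chld par)^[K v] v = chld par ((chld par)^[K v - 1] v)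
      conv_lhs => rw [h2]
      rw [Function.iterate_succ_apply']
    constructor
    · rw [e]; exact (chld_spec par hone).2
    · exact chain_rtg par v (K v - 1) (fun l hl => hφ_lt v l (by omega))
  have hsymm : ∀ a b : V,
      Relation.ReflTransGen (adjOn par {w | hasOneChild par w}) a b →
      Relation.ReflTransGen (adjOn par {w | hasOneChild par w}) b a :=
    fun a b h => by
      haveI : Std.Symm (adjOn par {w | hasOneChild par w}) :=
        ⟨fun u w hw => ⟨hw.2.1, hw.1, hw.2.2.1.symm, hw.2.2.2.symm⟩⟩
      exact Std.Symm.symm _ _ h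
  -- Short vertices bound
  have hshort : SH.card ≤ (p - 1) * (L.card + B.card) := by
    have hmap : ∀ v ∈ SH, φ v ∈ L ∪ B := by
      intro v _
      have hnone := hφ_not v
      by_cases hl : φ v ∈ leaves par
      · apply Finset.mem_union_left
        rw [hLdef, Finset.mem_filter]
        exact ⟨Finset.mem_univ _, hl⟩
      · apply Finset.mem_union_right
        rw [hBdef, Finset.mem_filter]
        exact ⟨Finset.mem_univ _, hl, hnone⟩
    have hfib := Finset.card_eq_sum_card_fiberwise hmap
    rw [hfib]
    have hbound : ∀ t ∈ L ∪ B, (SH.filter (fun v => φ v = t)).card ≤ p - 1 := by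
      intro t _
      rcases (SH.filter (fun v => φ v = t)).eq_empty_or_nonempty with he | hne
      · rw [he]; simp
      · obtain ⟨v0, hv0⟩ := hne
        have hmem : ∀ v ∈ SH.filter (fun v => φ v = t),
            hasOneChild par v ∧ ¬ p ≤ (comp v).ncard ∧ φ v = t := by
          intro v hv
          rw [Finset.mem_filter, hSHdef, Finset.mem_filter, hOdef,
            Finset.mem_filter] at hv
          exact ⟨hv.1.1.2, hv.1.2, hv.2⟩
        have hrel : ∀ v ∈ SH.filter (fun v => φ v = t),
            Relation.ReflTransGen (adjOn par {w | hasOneChild par w}) v0 v := by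
          intro v hv
          obtain ⟨h1, -, h3⟩ := hmem v hv
          obtain ⟨h1', -, h3'⟩ := hmem v0 hv0
          obtain ⟨e1, r1⟩ := hpar_φ v h1
          obtain ⟨e1', r1'⟩ := hpar_φ v0 h1'
          have hmid : (chld par)^[K v0 - 1] v0 = (chld par)^[K v - 1] v := by
            rw [← e1, ← e1', h3, h3']
          exact r1'.trans (hmid ▸ (hsymm _ _ r1))
        have hsub : ((SH.filter (fun v => φ v = t)) : Set V) ⊆ comp v0 := by
          intro v hv
          rw [Finset.mem_coe] at hv
          exact hrel v hv
        have h4 : (comp v0).ncard ≤ p - 1 := by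
          have := (hmem v0 hv0).2.1
          omega
        calc (SH.filter (fun v => φ v = t)).card
            = ((SH.filter (fun v => φ v = t)) : Set V).ncard :=
              (Set.ncard_coe_finset _).symm
          _ ≤ (comp v0).ncard := Set.ncard_le_ncard hsub (Set.toFinite _)
          _ ≤ p - 1 := h4
    calc ∑ t ∈ L ∪ B, (SH.filter (fun v => φ v = t)).card
        ≤ ∑ _t ∈ L ∪ B, (p - 1) := Finset.sum_le_sum hbound
      _ = (L ∪ B).card * (p - 1) := by rw [Finset.sum_const, smul_eq_mul]
      _ ≤ (L.card + B.card) * (p - 1) :=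
          Nat.mul_le_mul_right _ (Finset.card_union_le _ _)
      _ = (p - 1) * (L.card + B.card) := mul_comm _ _
  -- Identify set cardinalities
  have hLcard : (leaves par).ncard = L.card := by
    rw [← Set.ncard_coe_finset]
    congr 1
    ext v
    rw [Finset.coe_filter]
    simp
  have hLGcard : (longpaths par p).ncard = LG.card := by
    rw [← Set.ncard_coe_finset]
    congr 1
    ext v
    rw [Finset.coe_filter]
    simp
  -- Final arithmetic
  obtain ⟨q, rfl⟩ : ∃ q, p = q + 1 := ⟨p - 1, by omega⟩
  have hq1 : q + 1 - 1 = q := by omega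
  rw [hq1] at hshort
  rw [hLcard, hLGcard]
  have hBL : B.card ≤ L.card := by omega
  have f1 : (Fintype.card V : ℝ) = L.card + O.card + B.card := by exact_mod_cast hpart
  have f2 : (O.card : ℝ) = LG.card + SH.card := by exact_mod_cast hsplit
  have f3 : (SH.card : ℝ) ≤ q * (L.card + B.card) := by exact_mod_cast hshort
  have f4 : (B.card : ℝ) ≤ L.card := by exact_mod_cast hBL
  have f5 : (0 : ℝ) ≤ (q : ℝ) := Nat.cast_nonneg q
  have f6 : (0 : ℝ) ≤ (LG.card : ℝ) := Nat.cast_nonneg _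
  have f7 : (0 : ℝ) ≤ (L.card : ℝ) := Nat.cast_nonneg _
  have h6 : (0 : ℝ) < 6 * ((q : ℝ) + 1) := by positivity
  push_cast
  rw [div_le_iff₀ h6]
  nlinarith [mul_le_mul_of_nonneg_left f4 f5, mul_nonneg f5 f6, mul_nonneg f5 f7]
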